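/- Let N' < N'' be two consecutive ℓ-superchampion numbers associated to the same parameter ρ, with n' = ℓ(N'), n'' = ℓ(N''). Let Φ be a concave function on [n', n''] with log N' ≤ Φ(n') and log N'' ≤ Φ(n''). Then log g(n) ≤ Φ(n) for all integers n ∈ [n', n'']. -/

import Mathlib

/-- The additive function with `ℓ(p^α) = p^α` and `ℓ(1) = 0`. -/
def ell (M : ℕ) : ℕ := ∑ p ∈ M.primeFactors, p ^ (M.factorization p)

/-- `N` is an `ℓ`-superchampion number associated to the parameter `ρ`. -/
def IsSuperchampion (N : ℕ) (ρ : ℝ) : Prop :=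
  1 ≤ N ∧ ∀ M : ℕ, 1 ≤ M →
    (ell N : ℝ) - ρ * Real.log N ≤ (ell M : ℝ) - ρ * Real.log M

lemma ell_pos {M : ℕ} (hM : 2 ≤ M) : 0 < ell M := by
  obtain ⟨p, hp, hpd⟩ := Nat.exists_prime_and_dvd (by omega : M ≠ 1)
  have hmem : p ∈ M.primeFactors := Nat.mem_primeFactors.2 ⟨hp, hpd, by omega⟩
  calc 0 < p ^ (M.factorization p) := pow_pos hp.pos _
    _ ≤ ell M :=
      Finset.single_le_sum (f := fun q => q ^ M.factorization q)
        (fun i _ => Nat.zero_le _) hmem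

lemma ell_one : ell 1 = 0 := by simp [ell]

theorem stmt14 (g : ℕ → ℕ)
    (hg : ∀ n, IsGreatest {M : ℕ | 1 ≤ M ∧ ell M ≤ n} (g n))
    (ρ : ℝ) (N' N'' : ℕ) (hlt : N' < N'')
    (h1 : IsSuperchampion N' ρ) (h2 : IsSuperchampion N'' ρ)
    (hconsec : ∀ M : ℕ, N' < M → M < N'' → ¬ ∃ σ : ℝ, IsSuperchampion M σ)
    (Φ : ℝ → ℝ) (hΦ : ConcaveOn ℝ (Set.Icc (ell N' : ℝ) (ell N'')) Φ)
    (hN' : Real.log N' ≤ Φ (ell N')) (hN'' : Real.log N'' ≤ Φ (ell N'')) :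
    ∀ n : ℕ, ell N' ≤ n → n ≤ ell N'' → Real.log (g n) ≤ Φ n := by
  intro n hn1 hn2
  obtain ⟨hN'1, hsc1⟩ := h1
  obtain ⟨hN''1, hsc2⟩ := h2
  have hN'pos : (0:ℝ) < N' := by exact_mod_cast hN'1
  have hlog : Real.log N' < Real.log N'' :=
    Real.log_lt_log hN'pos (by exact_mod_cast hlt)
  have hE : (ell N' : ℝ) - ρ * Real.log N' = (ell N'' : ℝ) - ρ * Real.log N'' :=
    le_antisymm (hsc1 N'' (by omega)) (hsc2 N' hN'1)
  have hE' : ρ * (Real.log N'' - Real.log N') = (ell N'' : ℝ) - ell N' := by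
    nlinarith [hE]
  have hab : ell N' < ell N'' := by
    rcases lt_or_ge (ell N') (ell N'') with h | h
    · exact h
    · exfalso
      have h00 : ell N' = ell N'' := le_antisymm (hn1.trans hn2) h
      have hρ0 : ρ = 0 := by
        have hz : ρ * (Real.log N'' - Real.log N') = 0 := by rw [hE', h00]; ring
        rcases mul_eq_zero.1 hz with h | h
        · exact h
        · exact absurd h (by linarith)
      have h11 := hsc2 1 le_rfl
      simp [ell_one, hρ0] at h11
      have := ell_pos (show 2 ≤ N'' by omega)
      have : (0:ℝ) < ell N'' := by exact_mod_cast this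
      linarith
  set a : ℝ := (ell N' : ℝ) with ha
  set b : ℝ := (ell N'' : ℝ) with hb
  have hba : (0:ℝ) < b - a := by
    have : a < b := by rw [ha, hb]; exact_mod_cast hab
    linarith
  have hρ : 0 < ρ := by
    by_contra h
    push_neg at h
    nlinarith [hE', hlog]
  have hna : a ≤ (n:ℝ) := by rw [ha]; exact_mod_cast hn1
  have hnb : (n:ℝ) ≤ b := by rw [hb]; exact_mod_cast hn2
  set m : ℝ := ((n:ℝ) - a) / (b - a) with hm
  set l : ℝ := (b - (n:ℝ)) / (b - a) with hl
  have hl0 : 0 ≤ l := div_nonneg (by linarith) hba.le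
  have hm0 : 0 ≤ m := div_nonneg (by linarith) hba.le
  have hsum : l + m = 1 := by rw [hl, hm]; field_simp; ring
  have hcomb : l * a + m * b = (n:ℝ) := by rw [hl, hm]; field_simp; ring
  have hμba : m * (b - a) = (n:ℝ) - a := by rw [hm]; exact div_mul_cancel₀ _ hba.ne'
  obtain ⟨hg1, hg2⟩ := (hg n).1
  have hgcast : (ell (g n) : ℝ) ≤ n := by exact_mod_cast hg2
  have hbound := hsc1 (g n) hg1
  have h5 : ρ * Real.log (g n) ≤ ρ * Real.log N' + ((n:ℝ) - a) := by
    linarith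
  have h6 : ρ * (l * Real.log N' + m * Real.log N'') = ρ * Real.log N' + ((n:ℝ) - a) := by
    have hlm : l = 1 - m := by linarith
    have : ρ * (l * Real.log N' + m * Real.log N'')
        = ρ * Real.log N' + m * (ρ * (Real.log N'' - Real.log N')) := by
      rw [hlm]; ring
    rw [this, hE']
    rw [show (ell N'' : ℝ) - (ell N' : ℝ) = b - a from rfl, hμba]
  have h7 : Real.log (g n) ≤ l * Real.log N' + m * Real.log N'' := by
    have h8 : ρ * Real.log (g n) ≤ ρ * (l * Real.log N' + m * Real.log N'') := by
      rw [h6]; exact h5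
    exact le_of_mul_le_mul_left h8 hρ
  have hmema : a ∈ Set.Icc a b := ⟨le_rfl, by linarith⟩
  have hmemb : b ∈ Set.Icc a b := ⟨by linarith, le_rfl⟩
  have key := hΦ.2 hmema hmemb hl0 hm0 hsum
  rw [smul_eq_mul, smul_eq_mul, smul_eq_mul, smul_eq_mul, hcomb] at key
  have k1 : l * Real.log N' ≤ l * Φ a := mul_le_mul_of_nonneg_left hN' hl0
  have k2 : m * Real.log N'' ≤ m * Φ b := mul_le_mul_of_nonneg_left hN'' hm0
  linarith
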